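/- For a ≥ 2 and a ≤ n ≤ a², the maximum number of edges of a graph of order n with monophonic position number a equals the number of edges of the Turán graph T_{n,a}, and for n ≥ a²+1 it is strictly less than the number of edges of T_{n,a}. -/

import Mathlib

open SimpleGraph

/-- A walk is an *induced (monophonic) path* if it is a path and vertices on the
walk are adjacent in `G` exactly when they are consecutive on the walk. -/
def IsInducedPathW {V : Type*} (G : SimpleGraph V) {u v : V} (p : G.Walk u v) : Prop :=
  p.IsPath ∧ ∀ a b : V, a ∈ p.support → b ∈ p.support → (G.Adj a b ↔ p.toSubgraph.Adj a b)

/-- A walk is a *geodesic* if it is a shortest path between its endpoints. -/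
def IsGeodesicW {V : Type*} (G : SimpleGraph V) {u v : V} (p : G.Walk u v) : Prop :=
  p.IsPath ∧ p.length = G.dist u v

/-- A set of vertices is in *monophonic position* if no induced path of `G`
contains more than two of its vertices. -/
def IsMpSet {V : Type*} (G : SimpleGraph V) (S : Set V) : Prop :=
  ∀ ⦃u v : V⦄ (p : G.Walk u v), IsInducedPathW G p → (S ∩ {x | x ∈ p.support}).ncard ≤ 2

/-- A set of vertices is in *general position* if no geodesic of `G` contains
more than two of its vertices. -/
def IsGpSet {V : Type*} (G : SimpleGraph V) (S : Set V) : Prop :=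
  ∀ ⦃u v : V⦄ (p : G.Walk u v), IsGeodesicW G p → (S ∩ {x | x ∈ p.support}).ncard ≤ 2

/-- The monophonic position number `mp(G)`. -/
noncomputable def mpNum {V : Type*} (G : SimpleGraph V) : ℕ :=
  sSup {n | ∃ S : Set V, IsMpSet G S ∧ S.ncard = n}

/-- The general position number `gp(G)`. -/
noncomputable def gpNum {V : Type*} (G : SimpleGraph V) : ℕ :=
  sSup {n | ∃ S : Set V, IsGpSet G S ∧ S.ncard = n}

/-- `mex n a`: the largest number of edges of a graph of order `n` with
monophonic position number `a`. -/
noncomputable def mexNum (n a : ℕ) : ℕ :=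
  sSup {m | ∃ G : SimpleGraph (Fin n), mpNum G = a ∧ G.edgeSet.ncard = m}

section AuxPath

variable {V : Type*} {G : SimpleGraph V}

lemma aux_getVert_injOn {u v : V} {p : G.Walk u v}
    (hp : p.IsPath) : ∀ i ≤ p.length, ∀ j ≤ p.length, p.getVert i = p.getVert j → i = j := by
  induction p with
  | nil => intro i hi j hj _; simp at hi hj; omega
  | @cons a b c h q ih =>
    intro i hi j hj hij
    rw [Walk.length_cons] at hi hj
    have hq : q.IsPath := hp.of_cons
    have hna : a ∉ q.support := by
      have h2 := hp.support_nodup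
      simp only [Walk.support_cons, List.nodup_cons] at h2
      exact h2.1
    match i, j with
    | 0, 0 => rfl
    | 0, j+1 =>
      exfalso
      rw [Walk.getVert_zero, Walk.getVert_cons_succ] at hij
      exact hna (Walk.mem_support_iff_exists_getVert.2 ⟨j, hij.symm, by omega⟩)
    | i+1, 0 =>
      exfalso
      rw [Walk.getVert_zero, Walk.getVert_cons_succ] at hij
      exact hna (Walk.mem_support_iff_exists_getVert.2 ⟨i, hij, by omega⟩)
    | i+1, j+1 =>
      rw [Walk.getVert_cons_succ, Walk.getVert_cons_succ] at hij
      have := ih hq i (by omega) j (by omega) hij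
      omega

/-- On a path, subgraph-adjacent vertices are at consecutive positions. -/
lemma aux_adj_toSubgraph_consec {u v : V} {p : G.Walk u v}
    (hp : p.IsPath) {i j : ℕ} (hi : i ≤ p.length) (hj : j ≤ p.length)
    (h : p.toSubgraph.Adj (p.getVert i) (p.getVert j)) : j = i + 1 ∨ i = j + 1 := by
  obtain ⟨k, hk, hkl⟩ := p.toSubgraph_adj_iff.1 h
  rw [Sym2.eq_iff] at hk
  rcases hk with ⟨h1, h2⟩ | ⟨h1, h2⟩
  · have e1 := aux_getVert_injOn hp k (by omega) i hi h1
    have e2 := aux_getVert_injOn hp (k+1) (by omega) j hj h2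
    omega
  · have e1 := aux_getVert_injOn hp k (by omega) j hj h1
    have e2 := aux_getVert_injOn hp (k+1) (by omega) i hi h2
    omega

lemma aux_isMpSet_of_clique {S : Set V} (hS : S.Pairwise G.Adj) : IsMpSet G S := by
  intro u v p hp
  by_contra hcon
  push_neg at hcon
  obtain ⟨t, hts, htc⟩ := Set.exists_subset_card_eq (show 3 ≤ _ from hcon)
  rw [Set.ncard_eq_three] at htc
  obtain ⟨x, y, z, hxy, hxz, hyz, rfl⟩ := htc
  have hx := hts (show x ∈ ({x,y,z} : Set V) by simp)
  have hy := hts (show y ∈ ({x,y,z} : Set V) by simp)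
  have hz := hts (show z ∈ ({x,y,z} : Set V) by simp)
  obtain ⟨ix, hix, hixl⟩ := Walk.mem_support_iff_exists_getVert.1 hx.2
  obtain ⟨iy, hiy, hiyl⟩ := Walk.mem_support_iff_exists_getVert.1 hy.2
  obtain ⟨iz, hiz, hizl⟩ := Walk.mem_support_iff_exists_getVert.1 hz.2
  have axy := (hp.2 x y hx.2 hy.2).1 (hS hx.1 hy.1 hxy)
  have ayz := (hp.2 y z hy.2 hz.2).1 (hS hy.1 hz.1 hyz)
  have axz := (hp.2 x z hx.2 hz.2).1 (hS hx.1 hz.1 hxz)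
  rw [← hix, ← hiy] at axy
  rw [← hiy, ← hiz] at ayz
  rw [← hix, ← hiz] at axz
  have d1 := aux_adj_toSubgraph_consec hp.1 hixl hiyl axy
  have d2 := aux_adj_toSubgraph_consec hp.1 hiyl hizl ayz
  have d3 := aux_adj_toSubgraph_consec hp.1 hixl hizl axz
  omega

lemma aux_ncard_le_two_of_subset_pair {T : Set V} {x y : V} (h : T ⊆ {x, y}) : T.ncard ≤ 2 :=
  le_trans (Set.ncard_le_ncard h (Set.toFinite _))
    (le_trans (Set.ncard_insert_le _ _) (by simp))

lemma aux_support_subset_of_len_le_two {u v : V} {p : G.Walk u v} (hl : p.length ≤ 2) :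
    {x | x ∈ p.support} ⊆ {p.getVert 0, p.getVert 1, p.getVert 2} := by
  intro x hx
  obtain ⟨i, rfl, hi⟩ := Walk.mem_support_iff_exists_getVert.1 hx
  have hi2 : i ≤ 2 := le_trans hi hl
  interval_cases i <;> simp

variable {f : V → ℕ} (hG : ∀ v w, G.Adj v w ↔ f v ≠ f w)
include hG

/-- In a complete multipartite graph, induced paths have length at most 2. -/
lemma aux_inducedPath_length_le_two {u v : V} {p : G.Walk u v}
    (hp : IsInducedPathW G p) : p.length ≤ 2 := by
  by_contra hl
  push_neg at hl
  have hmem : ∀ i ≤ p.length, p.getVert i ∈ p.support := fun i hi =>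
    Walk.mem_support_iff_exists_getVert.2 ⟨i, rfl, hi⟩
  have hnadj : ∀ i j, i ≤ p.length → j ≤ p.length → j ≠ i + 1 → i ≠ j + 1 →
      f (p.getVert i) = f (p.getVert j) := by
    intro i j hi hj h1 h2
    by_contra hne
    have hadj : G.Adj (p.getVert i) (p.getVert j) := (hG _ _).2 hne
    have := aux_adj_toSubgraph_consec hp.1 hi hj ((hp.2 _ _ (hmem i hi) (hmem j hj)).1 hadj)
    omega
  have e02 := hnadj 0 2 (by omega) (by omega) (by omega) (by omega)
  have e13 := hnadj 1 3 (by omega) (by omega) (by omega) (by omega)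
  have e03 := hnadj 0 3 (by omega) (by omega) (by omega) (by omega)
  have a01 : G.Adj (p.getVert 0) (p.getVert 1) := p.adj_getVert_succ (by omega)
  rw [hG] at a01
  exact a01 (e03.trans e13.symm)

/-- A subset of one part of a complete multipartite graph is an mp-set. -/
lemma aux_isMpSet_of_const (S : Set V) (hS : ∀ x ∈ S, ∀ y ∈ S, f x = f y) : IsMpSet G S := by
  intro u v p hp
  have hl := aux_inducedPath_length_le_two hG hp
  rcases Nat.lt_or_ge p.length 2 with hl1 | hl2
  · refine aux_ncard_le_two_of_subset_pair (x := p.getVert 0) (y := p.getVert 1) ?_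
    intro x hx
    obtain ⟨i, rfl, hi⟩ := Walk.mem_support_iff_exists_getVert.1 hx.2
    have hi2 : i ≤ 1 := by omega
    interval_cases i <;> simp
  · have hl2 : p.length = 2 := by omega
    have a01 : G.Adj (p.getVert 0) (p.getVert 1) := p.adj_getVert_succ (by omega)
    rw [hG] at a01
    have hsub := aux_support_subset_of_len_le_two (G := G) hl
    by_cases h0 : p.getVert 0 ∈ S
    · refine aux_ncard_le_two_of_subset_pair (x := p.getVert 0) (y := p.getVert 2) ?_
      intro x hx
      rcases hsub hx.2 with h | h | h
      · left; exact h
      · exact absurd (hS _ h0 _ (h ▸ hx.1)) a01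
      · right; exact h
    · refine aux_ncard_le_two_of_subset_pair (x := p.getVert 1) (y := p.getVert 2) ?_
      intro x hx
      rcases hsub hx.2 with h | h | h
      · exact absurd (h ▸ hx.1) h0
      · left; exact h
      · right; exact h

/-- A transversal subset of a complete multipartite graph is an mp-set. -/
lemma aux_isMpSet_of_injOn (S : Set V) (hS : ∀ x ∈ S, ∀ y ∈ S, f x = f y → x = y) :
    IsMpSet G S := by
  intro u v p hp
  have hl := aux_inducedPath_length_le_two hG hp
  rcases Nat.lt_or_ge p.length 2 with hl1 | hl2
  · refine aux_ncard_le_two_of_subset_pair (x := p.getVert 0) (y := p.getVert 1) ?_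
    intro x hx
    obtain ⟨i, rfl, hi⟩ := Walk.mem_support_iff_exists_getVert.1 hx.2
    have hi2 : i ≤ 1 := by omega
    interval_cases i <;> simp
  · have hl2 : p.length = 2 := by omega
    have hne02 : p.getVert 0 ≠ p.getVert 2 := fun h => by
      have := aux_getVert_injOn hp.1 0 (by omega) 2 (by omega) h
      omega
    have e02 : f (p.getVert 0) = f (p.getVert 2) := by
      by_contra hne
      have hadj : G.Adj (p.getVert 0) (p.getVert 2) := (hG _ _).2 hne
      have hmem : ∀ i ≤ p.length, p.getVert i ∈ p.support := fun i hi =>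
        Walk.mem_support_iff_exists_getVert.2 ⟨i, rfl, hi⟩
      have := aux_adj_toSubgraph_consec hp.1 (by omega) (by omega)
        ((hp.2 _ _ (hmem 0 (by omega)) (hmem 2 (by omega))).1 hadj)
      omega
    have hsub := aux_support_subset_of_len_le_two (G := G) hl
    by_cases h0 : p.getVert 0 ∈ S
    · refine aux_ncard_le_two_of_subset_pair (x := p.getVert 0) (y := p.getVert 1) ?_
      intro x hx
      rcases hsub hx.2 with h | h | h
      · left; exact h
      · right; exact h
      · exact absurd (hS _ h0 _ (h ▸ hx.1) e02) (h ▸ hne02)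
    · refine aux_ncard_le_two_of_subset_pair (x := p.getVert 1) (y := p.getVert 2) ?_
      intro x hx
      rcases hsub hx.2 with h | h | h
      · exact absurd (h ▸ hx.1) h0
      · left; exact h
      · right; exact h

lemma aux_isInducedPathW_P3 {u v w : V} (huv : G.Adj u v) (hvw : G.Adj v w)
    (huw : f u = f w) (hne : u ≠ w) :
    IsInducedPathW G (Walk.cons huv (Walk.cons hvw Walk.nil)) := by
  have hnuw : ¬ G.Adj u w := by rw [hG]; push_neg; exact huw
  constructor
  · rw [Walk.isPath_def]
    simp [huv.ne, hvw.ne, hne]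
  · intro a b ha hb
    simp only [Walk.support_cons, Walk.support_nil, List.mem_cons, List.mem_singleton,
      List.not_mem_nil, or_false] at ha hb
    constructor
    · intro hab
      simp only [Walk.toSubgraph, Subgraph.sup_adj, subgraphOfAdj_adj, singletonSubgraph_adj,
        Pi.bot_apply, Prop.bot_eq_false, or_false]
      rcases ha with rfl | rfl | rfl <;> rcases hb with rfl | rfl | rfl <;>
        first
          | exact absurd hab (G.irrefl)
          | exact absurd hab hnuw
          | exact absurd hab.symm hnuw
          | simp [Sym2.eq_iff]
    · intro hab
      exact Subgraph.adj_sub _ hab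

end AuxPath
section AuxMp

lemma aux_mpset_empty {V : Type*} (G : SimpleGraph V) : IsMpSet G (∅ : Set V) := by
  intro u v p _
  simp

lemma aux_mpNum_set_nonempty {V : Type*} (G : SimpleGraph V) :
    {n | ∃ S : Set V, IsMpSet G S ∧ S.ncard = n}.Nonempty :=
  ⟨0, ∅, aux_mpset_empty G, by simp⟩

lemma aux_mpNum_set_bddAbove {V : Type*} [Finite V] (G : SimpleGraph V) :
    BddAbove {n | ∃ S : Set V, IsMpSet G S ∧ S.ncard = n} := by
  refine ⟨Nat.card V, ?_⟩
  rintro k ⟨S, _, rfl⟩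
  calc S.ncard ≤ (Set.univ : Set V).ncard := Set.ncard_le_ncard (Set.subset_univ S) Set.finite_univ
  _ = Nat.card V := Set.ncard_univ V

lemma aux_mpNum_eq_of {V : Type*} {G : SimpleGraph V} {a : ℕ}
    (h1 : ∀ S : Set V, IsMpSet G S → S.ncard ≤ a)
    (h2 : ∃ S : Set V, IsMpSet G S ∧ S.ncard = a) : mpNum G = a := by
  have hbdd : BddAbove {n | ∃ S : Set V, IsMpSet G S ∧ S.ncard = n} := by
    refine ⟨a, ?_⟩; rintro k ⟨S, hS, rfl⟩; exact h1 S hS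
  refine le_antisymm (csSup_le (aux_mpNum_set_nonempty G) ?_)
    (le_csSup hbdd ⟨h2.choose, h2.choose_spec⟩)
  rintro k ⟨S, hS, rfl⟩; exact h1 S hS

lemma aux_cliqueFree_of_mpNum {V : Type*} [Finite V] {G : SimpleGraph V} {a : ℕ}
    (h : mpNum G = a) : G.CliqueFree (a + 1) := by
  intro t ht
  have hS : IsMpSet G ↑t := aux_isMpSet_of_clique ht.isClique
  have hle : a + 1 ≤ mpNum G := le_csSup (aux_mpNum_set_bddAbove G)
    ⟨↑t, hS, by rw [Set.ncard_coe_finset, ht.card_eq]⟩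
  omega

lemma aux_isMpSet_image {V W : Type*} {G : SimpleGraph V} {H : SimpleGraph W} (φ : G ≃g H)
    {S : Set V} (hS : IsMpSet G S) : IsMpSet H (φ '' S) := by
  intro u v p hp
  set q := p.map φ.symm.toHom with hq
  have hqsupp : q.support = p.support.map φ.symm := Walk.support_map _ _
  have hmemq : ∀ x, x ∈ q.support ↔ φ x ∈ p.support := by
    intro x
    rw [hqsupp, List.mem_map]
    constructor
    · rintro ⟨y, hy, rfl⟩
      simpa using hy
    · intro hx
      exact ⟨φ x, hx, by simp⟩
  have hqind : IsInducedPathW G q := by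
    constructor
    · refine Walk.map_isPath_of_injective (fun x y h => ?_) hp.1
      exact φ.symm.injective h
    · intro a b ha hb
      have ha' : φ a ∈ p.support := (hmemq a).1 ha
      have hb' : φ b ∈ p.support := (hmemq b).1 hb
      have h1 : G.Adj a b ↔ H.Adj (φ a) (φ b) := (Iso.map_adj_iff φ).symm
      rw [h1, hp.2 (φ a) (φ b) ha' hb', hq, Walk.toSubgraph_map]
      constructor
      · intro h
        exact ⟨φ a, φ b, h, by simp, by simp⟩
      · rintro ⟨x, y, hxy, hx, hy⟩
        have h3 : x = φ a := by
          have := congrArg φ hx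
          simpa using this
        have h2 : y = φ b := by
          have := congrArg φ hy
          simpa using this
        rwa [h3, h2] at hxy
  have hkey : φ '' S ∩ {x | x ∈ p.support} = φ '' (S ∩ {x | x ∈ q.support}) := by
    ext x
    simp only [Set.mem_inter_iff, Set.mem_image, Set.mem_setOf_eq]
    constructor
    · rintro ⟨⟨s, hs, rfl⟩, hsupp⟩
      exact ⟨s, ⟨hs, (hmemq s).2 hsupp⟩, rfl⟩
    · rintro ⟨s, ⟨hs, hsupp⟩, rfl⟩
      exact ⟨⟨s, hs, rfl⟩, (hmemq s).1 hsupp⟩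
  rw [hkey, Set.ncard_image_of_injective _ φ.injective]
  exact hS q hqind

lemma aux_mpNum_le_of_iso {V W : Type*} [Finite W] (G : SimpleGraph V) (H : SimpleGraph W)
    (ψ : G ≃g H) : mpNum G ≤ mpNum H := by
  refine csSup_le (aux_mpNum_set_nonempty G) ?_
  rintro k ⟨S, hS, rfl⟩
  exact le_csSup (aux_mpNum_set_bddAbove H)
    ⟨ψ '' S, aux_isMpSet_image ψ hS, Set.ncard_image_of_injective _ ψ.injective⟩

lemma aux_mpNum_eq_of_iso {V W : Type*} [Finite V] [Finite W] {G : SimpleGraph V}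
    {H : SimpleGraph W} (φ : G ≃g H) : mpNum G = mpNum H :=
  le_antisymm (aux_mpNum_le_of_iso G H φ) (aux_mpNum_le_of_iso H G φ.symm)

end AuxMp

section AuxTuran

variable {n a : ℕ}

lemma aux_turan_hG : ∀ v w : Fin n, (turanGraph n a).Adj v w ↔ (v.val % a) ≠ (w.val % a) :=
  fun _ _ => Iff.rfl

/-- Upper bound on mp-sets of the Turán graph when `n ≤ a²`. -/
lemma aux_turan_mpset_le (ha : 2 ≤ a) (hn2 : n ≤ a ^ 2) {S : Set (Fin n)}
    (hS : IsMpSet (turanGraph n a) S) : S.ncard ≤ a := by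
  set f : Fin n → ℕ := fun v => v.val % a with hf
  have hG := aux_turan_hG (n := n) (a := a)
  have hIioa : (Set.Iio a).ncard = a := by
    rw [← Finset.coe_Iio, Set.ncard_coe_finset, Nat.card_Iio]
  by_cases hinj : ∀ x ∈ S, ∀ y ∈ S, f x = f y → x = y
  · have h1 : S.ncard = (f '' S).ncard := (Set.ncard_image_of_injOn hinj).symm
    rw [h1, ← hIioa]
    refine Set.ncard_le_ncard ?_ (Set.finite_Iio a)
    rintro - ⟨x, -, rfl⟩
    exact Nat.mod_lt _ (by omega)
  · push_neg at hinj
    obtain ⟨x, hx, y, hy, hfxy, hxy⟩ := hinj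
    by_cases hconst : ∀ z ∈ S, f z = f x
    · set g : Fin n → ℕ := fun v => v.val / a with hg
      have hginj : Set.InjOn g S := by
        intro v hv w hw hvw
        have h1 : v.val = a * (v.val / a) + v.val % a := (Nat.div_add_mod _ _).symm
        have h2 : w.val = a * (w.val / a) + w.val % a := (Nat.div_add_mod _ _).symm
        have h3 : v.val = w.val := by
          have e1 : v.val % a = w.val % a := (hconst v hv).trans (hconst w hw).symm
          have e2 : v.val / a = w.val / a := hvw
          rw [h1, h2, e1, e2]
        exact Fin.ext h3
      have h1 : S.ncard = (g '' S).ncard := (Set.ncard_image_of_injOn hginj).symm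
      rw [h1, ← hIioa]
      refine Set.ncard_le_ncard ?_ (Set.finite_Iio a)
      rintro - ⟨v, -, rfl⟩
      have hv2 : v.val < a * a := lt_of_lt_of_le v.isLt (by rw [← pow_two]; exact hn2)
      exact (Nat.div_lt_iff_lt_mul (by omega)).2 hv2
    · exfalso
      push_neg at hconst
      obtain ⟨z, hz, hfz⟩ := hconst
      have hxz : (turanGraph n a).Adj x z := (hG x z).2 (Ne.symm hfz)
      have hzy : (turanGraph n a).Adj z y := (hG z y).2 (by
        have h1 : z.val % a ≠ x.val % a := hfz
        have e : x.val % a = y.val % a := hfxy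
        omega)
      set p := Walk.cons hxz (Walk.cons hzy Walk.nil) with hp
      have hind := aux_isInducedPathW_P3 hG hxz hzy hfxy hxy
      have hle := hS p hind
      have hsub : ({x, z, y} : Set (Fin n)) ⊆ S ∩ {w | w ∈ p.support} := by
        rintro w (rfl | rfl | rfl)
        · exact ⟨hx, by simp [hp]⟩
        · exact ⟨hz, by simp [hp]⟩
        · exact ⟨hy, by simp [hp]⟩
      have h3 : ({x, z, y} : Set (Fin n)).ncard = 3 :=
        Set.ncard_eq_three.2 ⟨x, z, y, hxz.ne, hxy, hzy.ne, rfl⟩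
      have hfin : (S ∩ {w | w ∈ p.support}).Finite :=
        Set.Finite.subset p.support.finite_toSet Set.inter_subset_right
      have := Set.ncard_le_ncard hsub hfin
      omega

/-- mp number of the Turán graph equals `a` for `2 ≤ a ≤ n ≤ a²`. -/
lemma aux_turan_mpNum_eq (ha : 2 ≤ a) (han : a ≤ n) (hn2 : n ≤ a ^ 2) :
    mpNum (turanGraph n a) = a := by
  refine aux_mpNum_eq_of (fun S hS => aux_turan_mpset_le ha hn2 hS) ?_
  set S : Set (Fin n) := (fun i : Fin a => (⟨i.val, lt_of_lt_of_le i.isLt han⟩ : Fin n)) '' Set.univ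
    with hSdef
  refine ⟨S, ?_, ?_⟩
  · refine aux_isMpSet_of_injOn (aux_turan_hG) S ?_
    rintro - ⟨i, -, rfl⟩ - ⟨j, -, rfl⟩ hij
    simp only [Nat.mod_eq_of_lt i.isLt, Nat.mod_eq_of_lt j.isLt] at hij
    simp [Fin.ext_iff, hij]
  · rw [hSdef, Set.ncard_image_of_injective _ (fun i j hij => by
      simpa [Fin.ext_iff] using hij)]
    simp [Set.ncard_univ]

/-- mp number of the Turán graph is at least `a+1` when `n ≥ a² + 1`. -/
lemma aux_turan_mpNum_ge (ha : 2 ≤ a) (hn : a ^ 2 + 1 ≤ n) :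
    a + 1 ≤ mpNum (turanGraph n a) := by
  have han : a ≤ n := by nlinarith
  set S : Set (Fin n) :=
    (fun i : Fin (a+1) => (⟨i.val * a, by nlinarith [i.isLt]⟩ : Fin n)) '' Set.univ with hSdef
  have hmp : IsMpSet (turanGraph n a) S := by
    refine aux_isMpSet_of_const (aux_turan_hG) S ?_
    rintro - ⟨i, -, rfl⟩ - ⟨j, -, rfl⟩
    simp [Nat.mul_mod_left]
  have hcard : S.ncard = a + 1 := by
    rw [hSdef, Set.ncard_image_of_injective _ (fun i j hij => by
      have h1 : i.val * a = j.val * a := by simpa [Fin.ext_iff] using hij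
      have h2 : i.val = j.val := Nat.eq_of_mul_eq_mul_right (by omega) h1
      exact Fin.ext h2)]
    simp [Set.ncard_univ]
  exact le_csSup (aux_mpNum_set_bddAbove _) ⟨S, hmp, hcard⟩

end AuxTuran
lemma aux_ncard_edgeSet {V : Type*} [Fintype V] (G : SimpleGraph V) [DecidableRel G.Adj]
    [Fintype G.edgeSet] : G.edgeSet.ncard = G.edgeFinset.card := by
  rw [← coe_edgeFinset, Set.ncard_coe_finset]

theorem mexNum_eq_turan (a n : ℕ) (ha : 2 ≤ a) :
    (a ≤ n → n ≤ a ^ 2 → mexNum n a = (turanGraph n a).edgeSet.ncard) ∧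
    (a ^ 2 + 1 ≤ n → mexNum n a < (turanGraph n a).edgeSet.ncard) := by
  classical
  have ha0 : 0 < a := by omega
  have hTM : (turanGraph n a).IsTuranMaximal a := isTuranMaximal_turanGraph ha0
  set M : Set ℕ := {m | ∃ G : SimpleGraph (Fin n), mpNum G = a ∧ G.edgeSet.ncard = m} with hM
  set T : ℕ := (turanGraph n a).edgeSet.ncard with hT
  have hedge : ∀ (G : SimpleGraph (Fin n)), mpNum G = a → G.edgeSet.ncard ≤ T := by
    intro G hGmp
    have hcf : G.CliqueFree (a + 1) := aux_cliqueFree_of_mpNum hGmp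
    have hle := hTM.2 hcf
    have e1 : G.edgeSet.ncard = G.edgeFinset.card := aux_ncard_edgeSet G
    have e2 : T = (turanGraph n a).edgeFinset.card := aux_ncard_edgeSet _
    omega
  constructor
  · intro han hn2
    have hmemT : T ∈ M := ⟨turanGraph n a, aux_turan_mpNum_eq ha han hn2, rfl⟩
    have hub : ∀ m ∈ M, m ≤ T := by
      rintro m ⟨G, hGmp, rfl⟩
      exact hedge G hGmp
    exact le_antisymm (csSup_le ⟨T, hmemT⟩ hub) (le_csSup ⟨T, hub⟩ hmemT)
  · intro hn
    have hn2 : 2 ≤ n := by nlinarith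
    have hT0 : 0 < T := by
      have hadj : (turanGraph n a).Adj ⟨0, by omega⟩ ⟨1, by omega⟩ := by
        have h01 : (0 : ℕ) % a ≠ 1 % a := by
          rw [Nat.zero_mod, Nat.mod_eq_of_lt (by omega)]
          omega
        exact h01
      have hmem : s((⟨0, by omega⟩ : Fin n), (⟨1, by omega⟩ : Fin n)) ∈
          (turanGraph n a).edgeSet := hadj
      rw [hT]
      exact (Set.ncard_pos (Set.toFinite _)).2 ⟨_, hmem⟩
    have hub : ∀ m ∈ M, m < T := by
      rintro m ⟨G, hGmp, rfl⟩
      rcases lt_or_eq_of_le (hedge G hGmp) with h | h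
      · exact h
      · exfalso
        have hcf : G.CliqueFree (a + 1) := aux_cliqueFree_of_mpNum hGmp
        have e1 : G.edgeSet.ncard = G.edgeFinset.card := aux_ncard_edgeSet G
        have e2 : T = (turanGraph n a).edgeFinset.card := aux_ncard_edgeSet _
        have hGTM : G.IsTuranMaximal a := ⟨hcf, fun H _ hH => by
          have := hTM.2 hH
          omega⟩
        obtain ⟨φ⟩ := hGTM.nonempty_iso_turanGraph
        rw [Fintype.card_fin] at φ
        have heq := aux_mpNum_eq_of_iso φ
        have hge := aux_turan_mpNum_ge ha hn
        omega
    rcases Set.eq_empty_or_nonempty M with he | hne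
    · have : mexNum n a = 0 := by
        rw [mexNum, ← hM, he]
        exact csSup_empty
      omega
    · have hle : sSup M ≤ T - 1 := csSup_le hne (fun m hm => by
        have := hub m hm
        omega)
      have : mexNum n a = sSup M := rfl
      omega
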